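/- Let 1 ≤ p < ∞, let Γ be a countable discrete group, k, n ∈ ℕ, and A ∈ M_{n×k}(ℤΓ). Suppose the linear map ℓ^p(Γ, ℝ^k) → ℓ^p(Γ, ℝ^n) sending a to aA* is injective (i.e. the shift action on X_A is p-expansive). Then there is an injective Γ-equivariant group homomorphism from Δ^p(X_A) into the left ℤΓ-module (ℤΓ)^n/(ℤΓ)^kA*; that is, Δ^p(X_A) is isomorphic as a left ℤΓ-module to a ℤΓ-submodule of (ℤΓ)^n/(ℤΓ)^kA*. -/

import Mathlib

/-!
STATEMENT 7: If the shift action on `X_A` is `p`-expansive (i.e. `a ↦ aA*` is injective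
on `ℓ^p(Γ, ℝ^k)`, `1 ≤ p < ∞`), then `Δ^p(X_A)` embeds, by an injective `Γ`-equivariant
group homomorphism, into the left `ℤΓ`-module `(ℤΓ)^n/(ℤΓ)^kA*`.
-/

open scoped Classical

namespace Stmt7

variable {Γ : Type*} [Group Γ]

/-- The row vector `x A*`, for `x ∈ (M^Γ)^k` and `A ∈ M_{n×k}(ℤΓ)`. -/
noncomputable def mulStar {k n : ℕ} {M : Type*} [AddCommGroup M]
    (x : Fin k → Γ → M) (A : Matrix (Fin n) (Fin k) (MonoidAlgebra ℤ Γ)) :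
    Fin n → Γ → M :=
  fun i s => ∑ j, (A i j).coeff.sum fun u c => c • x j (s * u)

/-- The row vector `a A*` for a vector-valued function `a : Γ → M^k`. -/
noncomputable def rmulStar {k n : ℕ} {M : Type*} [AddCommGroup M]
    (a : Γ → Fin k → M) (A : Matrix (Fin n) (Fin k) (MonoidAlgebra ℤ Γ)) :
    Γ → Fin n → M :=
  fun s i => ∑ j, (A i j).coeff.sum fun u c => c • a (s * u) j

/-- The involution `g ↦ g*` of the integral group ring, `(∑ g_s s)* = ∑ g_s s⁻¹`. -/
noncomputable def star' (g : MonoidAlgebra ℤ Γ) : MonoidAlgebra ℤ Γ :=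
  MonoidAlgebra.ofCoeff (Finsupp.mapDomain (fun u => u⁻¹) g.coeff)

/-- The closed shift-invariant subgroup `X_A = {x ∈ ((ℝ/ℤ)^Γ)^k : xA* = 0}`. -/
def XA {k n : ℕ} (A : Matrix (Fin n) (Fin k) (MonoidAlgebra ℤ Γ)) :
    Set (Fin k → Γ → AddCircle (1 : ℝ)) :=
  {x | mulStar x A = 0}

/-- The group `Δ^p(X_A)` of `p`-homoclinic points of `X_A`: points `x ∈ X_A` such that
`s ↦ ρ_∞(x_s, 0)` lies in `ℓ^p(Γ)`. -/
def DeltaP {k n : ℕ} (A : Matrix (Fin n) (Fin k) (MonoidAlgebra ℤ Γ)) (p : ℝ) :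
    Set (Fin k → Γ → AddCircle (1 : ℝ)) :=
  {x | x ∈ XA A ∧
    Summable fun s : Γ => dist (fun j => x j s) (0 : Fin k → AddCircle (1 : ℝ)) ^ p}

/-- The image `(ℤΓ)^k A*` of `(ℤΓ)^k` inside `(ℤΓ)^n` under `b ↦ bA*`, as an additive
subgroup (it is in fact a left `ℤΓ`-submodule). -/
noncomputable def imStar {k n : ℕ} (A : Matrix (Fin n) (Fin k) (MonoidAlgebra ℤ Γ)) :
    AddSubgroup (Fin n → MonoidAlgebra ℤ Γ) :=
  AddSubgroup.closure
    {v | ∃ b : Fin k → MonoidAlgebra ℤ Γ, v = fun i => ∑ j, b j * star' (A i j)}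

/-- The left shift action of `Γ` on `((ℝ/ℤ)^Γ)^k` (dual to left multiplication). -/
def shift {k : ℕ} {M : Type*} (s : Γ) (x : Fin k → Γ → M) : Fin k → Γ → M :=
  fun j t => x j (s⁻¹ * t)

end Stmt7

namespace Stmt7Aux
open Stmt7 Filter Topology

variable {Γ : Type*} [Group Γ] {k n : ℕ}

/-! ### The canonical representative in `[-1/2, 1/2)` -/

noncomputable def rep (z : AddCircle (1:ℝ)) : ℝ := (AddCircle.equivIco 1 (-(1/2)) z : ℝ)

lemma rep_mem (z : AddCircle (1:ℝ)) : rep z ∈ Set.Ico (-(1/2) : ℝ) (1/2) := by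
  have h := (AddCircle.equivIco 1 (-(1/2)) z).2
  norm_num at h ⊢
  exact h

lemma rep_coe (z : AddCircle (1:ℝ)) : ((rep z : ℝ) : AddCircle (1:ℝ)) = z :=
  (AddCircle.equivIco 1 (-(1/2))).symm_apply_apply z

lemma norm_rep (z : AddCircle (1:ℝ)) : ‖z‖ = |rep z| := by
  conv_lhs => rw [← rep_coe z]
  rw [AddCircle.norm_eq]
  have h := rep_mem z
  have hr : round ((1:ℝ)⁻¹ * rep z) = 0 := by
    rw [inv_one, one_mul, round_eq, Int.floor_eq_zero_iff]
    constructor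
    · linarith [h.1]
    · linarith [h.2]
  rw [hr]
  norm_num

noncomputable def lftv (x : Fin k → Γ → AddCircle (1:ℝ)) : Fin k → Γ → ℝ :=
  fun j s => rep (x j s)

/-! ### Building finsupps from functions -/

noncomputable def toF (f : Γ → ℤ) : MonoidAlgebra ℤ Γ :=
  if h : (Function.support f).Finite then
    MonoidAlgebra.ofCoeff ⟨h.toFinset, f, fun a => by simp⟩ else 0

lemma toF_apply {f : Γ → ℤ} (h : (Function.support f).Finite) (s : Γ) :
    (toF f).coeff s = f s := by
  rw [toF, dif_pos h]; rfl

/-! ### Algebraic facts about `mulStar` -/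

lemma sumMul_apply (A : Matrix (Fin n) (Fin k) (MonoidAlgebra ℤ Γ))
    (B : Fin k → MonoidAlgebra ℤ Γ) (i : Fin n) (t : Γ) :
    (∑ j, B j * star' (A i j)).coeff t = mulStar (fun j s => (B j).coeff s) A i t := by
  rw [MonoidAlgebra.coeff_sum, Finsupp.finset_sum_apply]
  unfold mulStar
  refine Finset.sum_congr rfl fun j _ => ?_
  have hst : star' (A i j) = (A i j).coeff.sum fun u cu => MonoidAlgebra.single u⁻¹ cu := by
    rw [← MonoidAlgebra.coeff_inj]
    simp [star', Finsupp.mapDomain, MonoidAlgebra.coeff_finsuppSum, MonoidAlgebra.coeff_single]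
  rw [hst, Finsupp.sum, Finset.mul_sum, MonoidAlgebra.coeff_sum, Finsupp.finset_sum_apply, Finsupp.sum]
  refine Finset.sum_congr rfl fun u _ => ?_
  rw [MonoidAlgebra.coeff_mul_single_apply]
  simp [mul_comm]

lemma mulStar_addHom {M M' : Type*} [AddCommGroup M] [AddCommGroup M']
    (φ : M →+ M') (x : Fin k → Γ → M) (A : Matrix (Fin n) (Fin k) (MonoidAlgebra ℤ Γ))
    (i : Fin n) (s : Γ) :
    φ (mulStar x A i s) = mulStar (fun j t => φ (x j t)) A i s := by
  unfold mulStar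
  rw [map_sum]
  refine Finset.sum_congr rfl fun j _ => ?_
  rw [map_finsuppSum]
  exact Finsupp.sum_congr fun u _ => (φ.map_zsmul _ _)

lemma mulStar_add {M : Type*} [AddCommGroup M]
    (x y : Fin k → Γ → M) (A : Matrix (Fin n) (Fin k) (MonoidAlgebra ℤ Γ)) :
    mulStar (x + y) A = mulStar x A + mulStar y A := by
  funext i s
  unfold mulStar
  simp only [Pi.add_apply, smul_add, Finsupp.sum_add, Finset.sum_add_distrib]

lemma mulStar_neg {M : Type*} [AddCommGroup M]
    (x : Fin k → Γ → M) (A : Matrix (Fin n) (Fin k) (MonoidAlgebra ℤ Γ)) :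
    mulStar (-x) A = -(mulStar x A) := by
  funext i s
  unfold mulStar
  simp only [Pi.neg_apply, smul_neg, Finsupp.sum_neg, Finset.sum_neg_distrib]

lemma mulStar_shift {M : Type*} [AddCommGroup M] (s : Γ)
    (a : Fin k → Γ → M) (A : Matrix (Fin n) (Fin k) (MonoidAlgebra ℤ Γ))
    (i : Fin n) (t : Γ) :
    mulStar (shift s a) A i t = mulStar a A i (s⁻¹ * t) := by
  simp [mulStar, shift, mul_assoc]

/-! ### `imStar` as an explicit subgroup -/

noncomputable def imS (A : Matrix (Fin n) (Fin k) (MonoidAlgebra ℤ Γ)) :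
    AddSubgroup (Fin n → MonoidAlgebra ℤ Γ) where
  carrier := {v | ∃ b : Fin k → MonoidAlgebra ℤ Γ, v = fun i => ∑ j, b j * star' (A i j)}
  zero_mem' := ⟨0, by funext i; simp⟩
  add_mem' := by
    rintro v w ⟨b, rfl⟩ ⟨c, rfl⟩
    exact ⟨b + c, by funext i; simp [add_mul, Finset.sum_add_distrib]⟩
  neg_mem' := by
    rintro v ⟨b, rfl⟩
    exact ⟨-b, by funext i; simp [neg_mul, Finset.sum_neg_distrib, Pi.neg_apply]⟩

lemma imStar_eq (A : Matrix (Fin n) (Fin k) (MonoidAlgebra ℤ Γ)) :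
    imStar A = imS A := by
  rw [imStar, ← AddSubgroup.closure_eq (imS A)]; rfl

lemma mem_imStar (A : Matrix (Fin n) (Fin k) (MonoidAlgebra ℤ Γ))
    {v : Fin n → MonoidAlgebra ℤ Γ} :
    v ∈ imStar A ↔ ∃ b : Fin k → MonoidAlgebra ℤ Γ,
      v = fun i => ∑ j, b j * star' (A i j) := by
  rw [imStar_eq]; rfl

/-! ### Analytic facts -/

lemma tendsto_of_rpow {α : Type*} {f : α → ℝ} {p : ℝ} (hp : 1 ≤ p)
    (hf0 : ∀ s, 0 ≤ f s) (h : Tendsto (fun s => f s ^ p) cofinite (𝓝 0)) :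
    Tendsto f cofinite (𝓝 0) := by
  have hpne : p ≠ 0 := by linarith
  have key : ∀ s, f s = (f s ^ p) ^ p⁻¹ := by
    intro s
    rw [← Real.rpow_mul (hf0 s), mul_inv_cancel₀ hpne, Real.rpow_one]
  have hc : ContinuousAt (fun t : ℝ => t ^ p⁻¹) 0 :=
    Real.continuousAt_rpow_const 0 p⁻¹ (Or.inr (by positivity))
  have := hc.tendsto.comp h
  rw [Real.zero_rpow (by positivity : p⁻¹ ≠ 0)] at this
  exact this.congr fun s => (key s).symm

lemma mulStar_tendsto (A : Matrix (Fin n) (Fin k) (MonoidAlgebra ℤ Γ))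
    {a : Fin k → Γ → ℝ} (ha : ∀ j, Tendsto (a j) cofinite (𝓝 0)) (i : Fin n) :
    Tendsto (fun s => mulStar a A i s) cofinite (𝓝 0) := by
  have h1 : ∀ s, mulStar a A i s =
      ∑ j, ∑ u ∈ (A i j).coeff.support, ((A i j).coeff u : ℝ) * a j (s * u) := by
    intro s
    unfold mulStar
    refine Finset.sum_congr rfl fun j _ => ?_
    rw [Finsupp.sum]
    exact Finset.sum_congr rfl fun u _ => by rw [zsmul_eq_mul]
  simp only [h1]
  rw [show (0:ℝ) = ∑ j : Fin k, ∑ u ∈ (A i j).coeff.support, 0 by simp]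
  refine tendsto_finset_sum _ fun j _ => tendsto_finset_sum _ fun u _ => ?_
  rw [show (0:ℝ) = ((A i j).coeff u : ℝ) * 0 by ring]
  refine Tendsto.const_mul _ ?_
  exact (ha j).comp ((mul_left_injective u).tendsto_cofinite)

lemma support_round_finite {v : Γ → ℝ} (h : Tendsto v cofinite (𝓝 0)) :
    (Function.support fun s => round (v s)).Finite := by
  have hmem := h (Metric.ball_mem_nhds (0:ℝ) (by norm_num : (0:ℝ) < 1/2))
  rw [mem_map, mem_cofinite] at hmem
  refine hmem.subset ?_
  intro s hs
  simp only [Function.mem_support, ne_eq] at hs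
  simp only [Set.mem_compl_iff, Set.mem_preimage, Metric.mem_ball, Real.dist_0_eq_abs, not_lt]
  by_contra hlt
  push_neg at hlt
  obtain ⟨h1, h2⟩ := abs_lt.1 hlt
  exact hs (round_eq_zero_iff.2 ⟨by linarith, by linarith⟩)

lemma MA_add_apply (f g : MonoidAlgebra ℤ Γ) (t : Γ) : (f + g).coeff t = f.coeff t + g.coeff t :=
  Finsupp.add_apply f.coeff g.coeff t

lemma MA_sub_apply (f g : MonoidAlgebra ℤ Γ) (t : Γ) : (f - g).coeff t = f.coeff t - g.coeff t :=
  Finsupp.sub_apply f.coeff g.coeff t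

lemma MA_neg_apply (f : MonoidAlgebra ℤ Γ) (t : Γ) : (-f).coeff t = -(f.coeff t) :=
  Finsupp.neg_apply f.coeff t

/-! ### The integer output of a homoclinic point -/

noncomputable def Vfun (A : Matrix (Fin n) (Fin k) (MonoidAlgebra ℤ Γ))
    (x : Fin k → Γ → AddCircle (1:ℝ)) : Fin n → Γ → ℤ :=
  fun i s => round (mulStar (lftv x) A i s)

noncomputable def VV (A : Matrix (Fin n) (Fin k) (MonoidAlgebra ℤ Γ))
    (x : Fin k → Γ → AddCircle (1:ℝ)) : Fin n → MonoidAlgebra ℤ Γ :=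
  fun i => toF (Vfun A x i)

lemma Vfun_supp {A : Matrix (Fin n) (Fin k) (MonoidAlgebra ℤ Γ)}
    {x : Fin k → Γ → AddCircle (1:ℝ)}
    (hT : ∀ j, Tendsto (lftv x j) cofinite (𝓝 0)) (i : Fin n) :
    (Function.support (Vfun A x i)).Finite :=
  support_round_finite (mulStar_tendsto A hT i)

lemma VV_apply {A : Matrix (Fin n) (Fin k) (MonoidAlgebra ℤ Γ)}
    {x : Fin k → Γ → AddCircle (1:ℝ)}
    (hT : ∀ j, Tendsto (lftv x j) cofinite (𝓝 0)) (i : Fin n) (t : Γ) :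
    (VV A x i).coeff t = Vfun A x i t :=
  toF_apply (Vfun_supp hT i) t

/-- The quotient map as an `AddMonoidHom`. -/
noncomputable def qmap : ℝ →+ AddCircle (1:ℝ) :=
  QuotientAddGroup.mk' (AddSubgroup.zmultiples (1:ℝ))

lemma qmap_apply (r : ℝ) : qmap r = (r : AddCircle (1:ℝ)) := rfl

lemma coe_int_eq_zero (m : ℤ) : ((m : ℝ) : AddCircle (1:ℝ)) = 0 :=
  (AddCircle.coe_eq_zero_iff (1:ℝ)).2 ⟨m, by simp⟩

lemma Vcast {A : Matrix (Fin n) (Fin k) (MonoidAlgebra ℤ Γ)}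
    {x : Fin k → Γ → AddCircle (1:ℝ)} (hx : x ∈ XA A) (i : Fin n) (s : Γ) :
    ((Vfun A x i s : ℤ) : ℝ) = mulStar (lftv x) A i s := by
  have h0 : ((mulStar (lftv x) A i s : ℝ) : AddCircle (1:ℝ)) = 0 := by
    rw [← qmap_apply, mulStar_addHom qmap (lftv x) A i s]
    have hfn : (fun j t => qmap (lftv x j t)) = x := by
      funext j t
      exact rep_coe (x j t)
    rw [hfn]
    exact congrFun (congrFun hx i) s
  obtain ⟨m, hm⟩ := (AddCircle.coe_eq_zero_iff (1:ℝ)).1 h0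
  have hm' : mulStar (lftv x) A i s = (m : ℝ) := by
    rw [← hm]; simp
  rw [Vfun, hm', round_intCast]

/-! ### Tendsto facts for homoclinic points -/

lemma norm_tendsto {A : Matrix (Fin n) (Fin k) (MonoidAlgebra ℤ Γ)} {p : ℝ} (hp : 1 ≤ p)
    {x : Fin k → Γ → AddCircle (1:ℝ)} (hx : x ∈ DeltaP A p) (j : Fin k) :
    Tendsto (fun s => ‖x j s‖) cofinite (𝓝 0) := by
  have hd : Tendsto (fun s => dist (fun j' => x j' s) (0 : Fin k → AddCircle (1:ℝ)))
      cofinite (𝓝 0) :=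
    tendsto_of_rpow hp (fun s => dist_nonneg) hx.2.tendsto_cofinite_zero
  refine squeeze_zero (fun s => norm_nonneg _) (fun s => ?_) hd
  simpa using dist_le_pi_dist (fun j' => x j' s) (0 : Fin k → AddCircle (1:ℝ)) j

lemma lft_tendsto_of_norm {x : Fin k → Γ → AddCircle (1:ℝ)} {j : Fin k}
    (h : Tendsto (fun s => ‖x j s‖) cofinite (𝓝 0)) :
    Tendsto (lftv x j) cofinite (𝓝 0) := by
  refine squeeze_zero_norm (fun s => ?_) h
  rw [Real.norm_eq_abs]
  exact le_of_eq (norm_rep (x j s)).symm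

lemma lft_tendsto {A : Matrix (Fin n) (Fin k) (MonoidAlgebra ℤ Γ)} {p : ℝ} (hp : 1 ≤ p)
    {x : Fin k → Γ → AddCircle (1:ℝ)} (hx : x ∈ DeltaP A p) (j : Fin k) :
    Tendsto (lftv x j) cofinite (𝓝 0) :=
  lft_tendsto_of_norm (norm_tendsto hp hx j)

lemma summable_lft {A : Matrix (Fin n) (Fin k) (MonoidAlgebra ℤ Γ)} {p : ℝ} (hp : 1 ≤ p)
    {x : Fin k → Γ → AddCircle (1:ℝ)} (hx : x ∈ DeltaP A p) :
    Summable (fun s => ‖(fun j => lftv x j s : Fin k → ℝ)‖ ^ p) := by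
  have hp0 : (0:ℝ) ≤ p := le_trans zero_le_one hp
  refine Summable.of_nonneg_of_le (fun s => by positivity) (fun s => ?_) hx.2
  refine Real.rpow_le_rpow (norm_nonneg _) ?_ hp0
  rw [pi_norm_le_iff_of_nonneg dist_nonneg]
  intro j
  have h1 : ‖lftv x j s‖ = ‖x j s‖ := by
    rw [Real.norm_eq_abs]; exact (norm_rep (x j s)).symm
  rw [h1]
  simpa using dist_le_pi_dist (fun j' => x j' s) (0 : Fin k → AddCircle (1:ℝ)) j

end Stmt7Aux


open Stmt7 in
theorem stmt7 {Γ : Type*} [Group Γ] [Countable Γ] (p : ℝ) (hp : 1 ≤ p) (k n : ℕ)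
    (A : Matrix (Fin n) (Fin k) (MonoidAlgebra ℤ Γ))
    -- hypothesis: `a ↦ aA*` is injective on `ℓ^p(Γ, ℝ^k)`
    (hinj : ∀ a b : Γ → Fin k → ℝ, Summable (fun s => ‖a s‖ ^ p) →
      Summable (fun s => ‖b s‖ ^ p) → rmulStar a A = rmulStar b A → a = b) :
    -- conclusion: an injective `Γ`-equivariant group homomorphism
    -- `Δ^p(X_A) → (ℤΓ)^n/(ℤΓ)^kA*`
    ∃ Φ : (Fin k → Γ → AddCircle (1 : ℝ)) →
        (Fin n → MonoidAlgebra ℤ Γ) ⧸ imStar A,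
      Set.InjOn Φ (DeltaP A p) ∧
      (∀ x ∈ DeltaP A p, ∀ y ∈ DeltaP A p, Φ (x + y) = Φ x + Φ y) ∧
      (∀ s : Γ, ∀ x ∈ DeltaP A p, ∀ v : Fin n → MonoidAlgebra ℤ Γ,
        Φ x = QuotientAddGroup.mk v →
          Φ (shift s x) = QuotientAddGroup.mk
            (fun i => MonoidAlgebra.single s (1 : ℤ) * v i)) := by
  classical
  open Stmt7Aux Filter Topology in
  refine ⟨fun x => QuotientAddGroup.mk (VV A x), ?_, ?_, ?_⟩
  · -- Injectivity
    intro x hx y hy h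
    have hTx : ∀ j, Tendsto (lftv x j) cofinite (𝓝 0) := fun j => lft_tendsto hp hx j
    have hTy : ∀ j, Tendsto (lftv y j) cofinite (𝓝 0) := fun j => lft_tendsto hp hy j
    rw [QuotientAddGroup.eq_iff_sub_mem, mem_imStar] at h
    obtain ⟨B, hB⟩ := h
    have hpt : ∀ i t, Vfun A x i t = Vfun A y i t + mulStar (fun j s => (B j).coeff s) A i t := by
      intro i t
      have h1 : (VV A x - VV A y) i = ∑ j, B j * star' (A i j) := by rw [hB]
      have h2 : (VV A x i).coeff t - (VV A y i).coeff t = mulStar (fun j s => (B j).coeff s) A i t := by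
        rw [← MA_sub_apply, ← Pi.sub_apply (VV A x) (VV A y) i, h1]
        exact sumMul_apply A B i t
      rw [VV_apply hTx, VV_apply hTy] at h2
      linarith
    set a : Γ → Fin k → ℝ := fun s j => lftv x j s with ha
    set b : Γ → Fin k → ℝ := fun s j => lftv y j s + (((B j).coeff s : ℤ) : ℝ) with hbdef
    have hsa : Summable (fun s => ‖a s‖ ^ p) := summable_lft hp hx
    have hsb : Summable (fun s => ‖b s‖ ^ p) := by
      have hfin : (⋃ j, ((B j).coeff.support : Set Γ)).Finite :=
        Set.finite_iUnion fun j => (B j).coeff.support.finite_toSet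
      refine (summable_lft hp hy).congr_cofinite ?_
      refine hfin.eventually_cofinite_notMem.mono fun s hs => ?_
      have hz : ∀ j, (B j).coeff s = 0 := fun j => Finsupp.notMem_support_iff.1
        (fun hmem => hs (Set.mem_iUnion.2 ⟨j, hmem⟩))
      have hbs : b s = fun j => lftv y j s := by
        funext j
        simp [hbdef, hz j]
      show ‖(fun j => lftv y j s)‖ ^ p = ‖b s‖ ^ p
      rw [hbs]
    have hr : rmulStar a A = rmulStar b A := by
      funext s i
      have e1 : rmulStar a A s i = mulStar (lftv x) A i s := rfl
      have e2 : rmulStar b A s i = mulStar (lftv y) A i s +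
          mulStar (fun j t => (((B j).coeff t : ℤ) : ℝ)) A i s := by
        have h3 := congrFun (congrFun
          (mulStar_add (lftv y) (fun j t => (((B j).coeff t : ℤ) : ℝ)) A) i) s
        calc rmulStar b A s i
            = mulStar (lftv y + fun j t => (((B j).coeff t : ℤ) : ℝ)) A i s := rfl
          _ = _ := by rw [h3]; rfl
      have e3 : mulStar (fun j t => (((B j).coeff t : ℤ) : ℝ)) A i s
          = ((mulStar (fun j t => (B j).coeff t) A i s : ℤ) : ℝ) :=
        (mulStar_addHom (Int.castAddHom ℝ) (fun j t => (B j).coeff t) A i s).symm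
      rw [e1, e2, e3, ← Vcast hx.1 i s, ← Vcast hy.1 i s]
      have h4 := hpt i s
      rw [h4]
      push_cast
      ring
    have hab := hinj a b hsa hsb hr
    funext j t
    have h5 : a t j = b t j := congrFun (congrFun hab t) j
    simp only [ha, hbdef] at h5
    calc x j t = ((lftv x j t : ℝ) : AddCircle (1:ℝ)) := (rep_coe _).symm
      _ = ((lftv y j t + (((B j).coeff t : ℤ) : ℝ) : ℝ) : AddCircle (1:ℝ)) := by rw [h5]
      _ = y j t := by
          rw [AddCircle.coe_add, coe_int_eq_zero, add_zero]
          exact rep_coe (y j t)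
  · -- Additivity
    intro x hx y hy
    have hTx : ∀ j, Tendsto (lftv x j) cofinite (𝓝 0) := fun j => lft_tendsto hp hx j
    have hTy : ∀ j, Tendsto (lftv y j) cofinite (𝓝 0) := fun j => lft_tendsto hp hy j
    have hNxy : ∀ j, Tendsto (fun s => ‖(x + y) j s‖) cofinite (𝓝 0) := by
      intro j
      refine squeeze_zero (fun s => norm_nonneg _) (fun s => ?_)
        (by simpa using (norm_tendsto hp hx j).add (norm_tendsto hp hy j))
      simpa using norm_add_le (x j s) (y j s)
    have hTxy : ∀ j, Tendsto (lftv (x + y) j) cofinite (𝓝 0) :=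
      fun j => lft_tendsto_of_norm (hNxy j)
    have hxyXA : x + y ∈ XA A := by
      show mulStar (x + y) A = 0
      rw [mulStar_add, show mulStar x A = 0 from hx.1, show mulStar y A = 0 from hy.1,
        add_zero]
    set d : Fin k → Γ → ℝ := fun j s => lftv x j s + lftv y j s - lftv (x + y) j s with hd
    have hdT : ∀ j, Tendsto (d j) cofinite (𝓝 0) := by
      intro j
      have := ((hTx j).add (hTy j)).sub (hTxy j)
      simpa using this
    have hdInt : ∀ j s, ((round (d j s) : ℤ) : ℝ) = d j s := by
      intro j s
      have h0 : ((d j s : ℝ) : AddCircle (1:ℝ)) = 0 := by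
        show (((lftv x j s + lftv y j s - lftv (x + y) j s : ℝ)) : AddCircle (1:ℝ)) = 0
        rw [AddCircle.coe_sub, AddCircle.coe_add]
        show ((rep (x j s) : ℝ) : AddCircle (1:ℝ)) + ((rep (y j s) : ℝ) : AddCircle (1:ℝ))
          - ((rep ((x + y) j s) : ℝ) : AddCircle (1:ℝ)) = 0
        rw [rep_coe, rep_coe, rep_coe]
        simp
      obtain ⟨m, hm⟩ := (AddCircle.coe_eq_zero_iff (1:ℝ)).1 h0
      have hm' : d j s = (m : ℝ) := by rw [← hm]; simp
      rw [hm', round_intCast]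
    have hBsupp : ∀ j, (Function.support fun s => round (d j s)).Finite :=
      fun j => support_round_finite (hdT j)
    set B : Fin k → MonoidAlgebra ℤ Γ := fun j => toF (fun s => round (d j s)) with hBdef
    have hBapp : ∀ j s, (B j).coeff s = round (d j s) := fun j s => toF_apply (hBsupp j) s
    rw [← QuotientAddGroup.mk_add, QuotientAddGroup.eq_iff_sub_mem, mem_imStar]
    refine ⟨fun j => -B j, ?_⟩
    funext i
    refine MonoidAlgebra.ext (Finsupp.ext fun t => ?_)
    rw [show ((fun i => ∑ j, (fun j' => -B j') j * star' (A i j)) i).coeff t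
        = mulStar (fun j s => (-B j).coeff s) A i t from sumMul_apply A (fun j => -B j) i t]
    have hBneg : (fun (j : Fin k) (s : Γ) => (-B j).coeff s) = fun j s => -(round (d j s)) := by
      funext j s
      rw [MonoidAlgebra.coeff_neg, Finsupp.neg_apply, hBapp]
    rw [hBneg]
    simp only [Pi.sub_apply, Pi.add_apply, MA_sub_apply, MA_add_apply]
    rw [VV_apply hTxy, VV_apply hTx, VV_apply hTy]
    apply @Int.cast_injective ℝ _ _ _
    have hc : ((mulStar (fun j s => -(round (d j s))) A i t : ℤ) : ℝ)
        = mulStar (fun j s => ((-(round (d j s)) : ℤ) : ℝ)) A i t :=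
      mulStar_addHom (Int.castAddHom ℝ) (fun j s => -(round (d j s))) A i t
    push_cast
    rw [Vcast hxyXA i t, Vcast hx.1 i t, Vcast hy.1 i t]
    rw [show ((mulStar (fun j s => -(round (d j s))) A i t : ℤ) : ℝ)
        = mulStar (fun j s => ((-(round (d j s)) : ℤ) : ℝ)) A i t from hc] at *
    have hcd : (fun (j : Fin k) (s : Γ) => ((-(round (d j s)) : ℤ) : ℝ)) = -d := by
      funext j s
      push_cast
      rw [hdInt j s]
      rfl
    rw [hcd, show mulStar (-d) A = -(mulStar d A) from mulStar_neg d A]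
    have hd2 : d = (lftv x + lftv y) + -(lftv (x + y)) := by
      funext j s
      simp only [hd, Pi.add_apply, Pi.neg_apply]
      ring
    rw [hd2, mulStar_add, mulStar_neg, mulStar_add]
    simp only [Pi.add_apply, Pi.neg_apply]
    ring
  · -- Equivariance
    intro s x hx v hv
    have hTx : ∀ j, Tendsto (lftv x j) cofinite (𝓝 0) := fun j => lft_tendsto hp hx j
    have hfin : ∀ i, (Function.support (Vfun A x i)).Finite := fun i => Vfun_supp hTx i
    have hVs : ∀ i t, Vfun A (shift s x) i t = Vfun A x i (s⁻¹ * t) := by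
      intro i t
      unfold Vfun
      congr 1
      have hl : lftv (shift s x) = shift s (lftv x) := rfl
      rw [hl, mulStar_shift]
    have hsupp : ∀ i, (Function.support (Vfun A (shift s x) i)).Finite := by
      intro i
      refine Set.Finite.subset ((hfin i).image (fun t => s * t)) ?_
      intro t ht
      rw [Function.mem_support, hVs i t] at ht
      exact ⟨s⁻¹ * t, Function.mem_support.2 ht, by group⟩
    have hkey : VV A (shift s x) = fun i => MonoidAlgebra.single s (1:ℤ) * VV A x i := by
      funext i
      refine MonoidAlgebra.ext (Finsupp.ext fun t => ?_)
      rw [show (VV A (shift s x) i).coeff t = Vfun A (shift s x) i t from toF_apply (hsupp i) t,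
        hVs, MonoidAlgebra.coeff_single_mul_apply, one_mul, VV_apply hTx]
    rw [QuotientAddGroup.eq_iff_sub_mem, mem_imStar] at hv
    obtain ⟨B, hB⟩ := hv
    rw [QuotientAddGroup.eq_iff_sub_mem, mem_imStar, hkey]
    refine ⟨fun j => MonoidAlgebra.single s (1:ℤ) * B j, ?_⟩
    funext i
    have hBi := congrFun hB i
    simp only [Pi.sub_apply] at hBi
    simp only [Pi.sub_apply]
    rw [← mul_sub, hBi, Finset.mul_sum]
    exact Finset.sum_congr rfl fun j _ => (mul_assoc _ _ _).symm
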